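/- Suppose to each location y ∈ 𝒳 is assigned a nonempty set Φ_y ⊆ 𝒳 with y ∈ Φ_y (the PLSs may intersect), let ε > 0 and Ẽ_m > 0, and suppose the obfuscation mechanism f satisfies ε-DP on each Φ_y and E(Φ_y) ≥ e^ε · Ẽ_m for every y ∈ 𝒳. Then for every observed pseudo-location x' ∈ 𝒳, min_{y∈𝒳} PivEr(Φ_y, x') ≥ Ẽ_m. -/
import Mathlib


open Finset

noncomputable section

/-- Points of the Euclidean plane. -/
abbrev Pt : Type := EuclideanSpace ℝ (Fin 2)

/-- if each location `y ∈ X` is assigned a nonempty PLS `Φ y ∋ y` (possibly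
intersecting), `f` satisfies `ε`-DP on each `Φ y` and `E(Φ y) ≥ e^ε · Em` for every `y ∈ X`,
then for every observed `x'`, `min_{y ∈ X} PivEr(Φ y, x') ≥ Em`. -/
theorem stmt5
    (X : Finset Pt) (hX : X.Nonempty)
    (pr : Pt → ℝ) (hprpos : ∀ x ∈ X, 0 < pr x) (hprsum : ∑ x ∈ X, pr x = 1)
    (f : Pt → Pt → ℝ)  -- `f x' x` denotes f(x' | x)
    (hfpos : ∀ x ∈ X, ∀ x' ∈ X, 0 < f x' x)
    (hfsum : ∀ x ∈ X, ∑ x' ∈ X, f x' x = 1)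
    (Φ : Pt → Finset Pt)
    (hne : ∀ y ∈ X, (Φ y).Nonempty)
    (hmem : ∀ y ∈ X, y ∈ Φ y)
    (hsub : ∀ y ∈ X, Φ y ⊆ X)
    (ε Em : ℝ) (hε : 0 < ε) (hEm : 0 < Em)
    (hDP : ∀ y ∈ X, ∀ a ∈ Φ y, ∀ b ∈ Φ y, ∀ x' ∈ X, f x' a ≤ Real.exp ε * f x' b)
    (hE : ∀ y (hy : y ∈ X), Real.exp ε * Em ≤
      (Φ y).inf' (hne y hy) (fun xh => ∑ x ∈ Φ y, (pr x / ∑ z ∈ Φ y, pr z) * dist xh x))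
    (x' : Pt) (hx' : x' ∈ X)
    (post : Pt → ℝ)  -- `post x` denotes the posterior Pr(x | x')
    (hpost : ∀ x, post x = pr x * f x' x / ∑ y ∈ X, pr y * f x' y)
    :
    Em ≤ ⨅ y : X, (Φ y.1).inf' (hne y.1 y.2)
        (fun xh => ∑ x ∈ Φ y.1, (post x / ∑ z ∈ Φ y.1, post z) * dist xh x) := by
  haveI : Nonempty {y // y ∈ X} := ⟨⟨hX.choose, hX.choose_spec⟩⟩
  apply le_ciInf
  rintro ⟨y, hy⟩
  apply Finset.le_inf'
  intro xh hxh
  have hPpos : 0 < ∑ z ∈ Φ y, pr z :=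
    Finset.sum_pos (fun z hz => hprpos z (hsub y hy hz)) (hne y hy)
  have hCpos : 0 < ∑ z ∈ X, pr z * f x' z :=
    Finset.sum_pos (fun z hz => mul_pos (hprpos z hz) (hfpos z hz x' hx')) hX
  have hTpos : 0 < ∑ z ∈ Φ y, pr z * f x' z :=
    Finset.sum_pos (fun z hz => mul_pos (hprpos z (hsub y hy hz))
      (hfpos z (hsub y hy hz) x' hx')) (hne y hy)
  have hTsum : ∑ z ∈ Φ y, post z = (∑ z ∈ Φ y, pr z * f x' z) / (∑ z ∈ X, pr z * f x' z) := by
    rw [Finset.sum_div]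
    exact Finset.sum_congr rfl fun z hz => hpost z
  have hratio : ∀ x ∈ Φ y, post x / (∑ z ∈ Φ y, post z)
      = pr x * f x' x / (∑ z ∈ Φ y, pr z * f x' z) := by
    intro x hx
    rw [hTsum, hpost]
    field_simp
  have key : Real.exp ε * Em ≤ ∑ x ∈ Φ y, (pr x / ∑ z ∈ Φ y, pr z) * dist xh x :=
    le_trans (hE y hy) (Finset.inf'_le _ hxh)
  have hpt : ∀ x ∈ Φ y, (pr x / ∑ z ∈ Φ y, pr z) * dist xh x
      ≤ Real.exp ε * ((post x / ∑ z ∈ Φ y, post z) * dist xh x) := by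
    intro x hx
    rw [hratio x hx]
    have hd : 0 ≤ dist xh x := dist_nonneg
    have hfx : 0 < f x' x := hfpos x (hsub y hy hx) x' hx'
    have hpx : 0 < pr x := hprpos x (hsub y hy hx)
    have hTle : (∑ z ∈ Φ y, pr z * f x' z) ≤ Real.exp ε * f x' x * ∑ z ∈ Φ y, pr z := by
      rw [Finset.mul_sum]
      apply Finset.sum_le_sum
      intro z hz
      have hdp := hDP y hy z hz x hx x' hx'
      have hpz := (hprpos z (hsub y hy hz)).le
      nlinarith
    have h1 : pr x / (∑ z ∈ Φ y, pr z)
        ≤ Real.exp ε * (pr x * f x' x / (∑ z ∈ Φ y, pr z * f x' z)) := by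
      rw [mul_div_assoc', div_le_div_iff₀ hPpos hTpos]
      nlinarith
    calc (pr x / ∑ z ∈ Φ y, pr z) * dist xh x
        ≤ (Real.exp ε * (pr x * f x' x / (∑ z ∈ Φ y, pr z * f x' z))) * dist xh x :=
          mul_le_mul_of_nonneg_right h1 hd
      _ = Real.exp ε * ((pr x * f x' x / (∑ z ∈ Φ y, pr z * f x' z)) * dist xh x) := by ring
  have sumle : ∑ x ∈ Φ y, (pr x / ∑ z ∈ Φ y, pr z) * dist xh x
      ≤ Real.exp ε * ∑ x ∈ Φ y, (post x / ∑ z ∈ Φ y, post z) * dist xh x := by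
    rw [Finset.mul_sum]
    exact Finset.sum_le_sum hpt
  exact le_of_mul_le_mul_left (le_trans key sumle) (Real.exp_pos ε)
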